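/- A permutation σ of {1,…,n} is an involution (σ = σ⁻¹) if and only if its insertion and recording piles under Extended Patience Sorting coincide: R(σ) = S(σ). Consequently, Extended Patience Sorting restricts to a bijection between involutions in S_n and those pile configurations R on {1,…,n} for which (R, R) arises as the pair (R(σ), S(σ)) of some permutation σ. -/

import Mathlib

/-- One step of Patience Sorting: place card `c` on the leftmost pile whose top
(head) is larger than `c`, or start a new pile on the right.  Piles are stored
top-first, so each pile is an increasing list whose head is the top (smallest) card. -/
def PSinsert (c : ℕ) : List (List ℕ) → List (List ℕ)
  | [] => [[c]]
  | [] :: ps => [] :: PSinsert c ps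
  | (x :: p) :: ps =>
      if c < x then (c :: x :: p) :: ps else (x :: p) :: PSinsert c ps

/-- The pile configuration `R(w)` produced by Patience Sorting applied to the word `w`. -/
def PSpiles (w : List ℕ) : List (List ℕ) :=
  w.foldl (fun ps c => PSinsert c ps) []

/-- The one-line word (with values `1,…,n`) of a permutation of `Fin n`. -/
def permWord {n : ℕ} (σ : Equiv.Perm (Fin n)) : List ℕ :=
  List.ofFn fun i => (σ i : ℕ) + 1

/-- The recording piles `S(w)` of Extended Patience Sorting: the `j`-th recording pile is
the set of (1-based) positions `i` whose value `w(i)` lies in the `j`-th insertion pile,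
listed in increasing order from top to bottom (so, like the insertion piles, each
recording pile is stored top-first as an increasing list). -/
def Spiles (w : List ℕ) : List (List ℕ) :=
  (PSpiles w).map fun p =>
    (List.range' 1 w.length).filter (fun i => decide (w.getD (i - 1) 0 ∈ p))

namespace Stmt10Aux

open List

abbrev P := ℕ × ℕ

def ins (c : P) : List (List P) → List (List P)
  | [] => [[c]]
  | [] :: ps => [] :: ins c ps
  | (x :: p) :: ps =>
      if c.2 < x.2 then (c :: x :: p) :: ps else (x :: p) :: ins c ps

def pilesP (l : List P) : List (List P) := l.foldl (fun s c => ins c s) []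

lemma ins_proj (c : P) : ∀ ps : List (List P),
    (ins c ps).map (List.map Prod.snd) = PSinsert c.2 (ps.map (List.map Prod.snd))
  | [] => rfl
  | [] :: ps => by simp [ins, PSinsert, ins_proj c ps]
  | (x :: p) :: ps => by
      by_cases h : c.2 < x.2 <;> simp [ins, PSinsert, h, ins_proj c ps]

lemma foldl_proj : ∀ (l : List P) (ps : List (List P)),
    (List.foldl (fun s c => ins c s) ps l).map (List.map Prod.snd)
      = List.foldl (fun s c => PSinsert c s) (ps.map (List.map Prod.snd)) (l.map Prod.snd)
  | [], ps => rfl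
  | c :: l, ps => by
      simp only [List.foldl_cons, List.map_cons, foldl_proj l (ins c ps), ins_proj]

lemma pilesP_proj (l : List P) :
    (pilesP l).map (List.map Prod.snd) = PSpiles (l.map Prod.snd) :=
  foldl_proj l []

lemma ins_flatten (c : P) : ∀ ps : List (List P), (ins c ps).flatten ~ c :: ps.flatten
  | [] => by simp [ins]
  | [] :: ps => by simpa [ins] using ins_flatten c ps
  | (x :: p) :: ps => by
      by_cases h : c.2 < x.2
      · simp [ins, h]
      · simp only [ins, if_neg h, flatten_cons]
        calc (x :: p) ++ (ins c ps).flatten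
            ~ (x :: p) ++ (c :: ps.flatten) := (ins_flatten c ps).append_left _
          _ ~ c :: ((x :: p) ++ ps.flatten) := List.perm_middle

lemma foldl_flatten : ∀ (l : List P) (ps : List (List P)),
    (List.foldl (fun s c => ins c s) ps l).flatten ~ ps.flatten ++ l
  | [], ps => by simp
  | c :: l, ps => by
      calc (List.foldl (fun s c => ins c s) (ins c ps) l).flatten
          ~ (ins c ps).flatten ++ l := foldl_flatten l (ins c ps)
        _ ~ (c :: ps.flatten) ++ l := (ins_flatten c ps).append_right l
        _ ~ ps.flatten ++ c :: l := by simpa using (List.perm_middle (a := c) (l₁ := ps.flatten) (l₂ := l)).symm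

lemma pilesP_flatten (l : List P) : (pilesP l).flatten ~ l := by
  simpa [pilesP] using foldl_flatten l []

end Stmt10Aux

namespace Stmt10Aux
open List

def fstlt (a b : P) : Prop := a.1 < b.1
def sndne (a b : P) : Prop := a.2 ≠ b.2

def MinP (l : List P) (a : P) : Prop := ∀ b ∈ l, b.1 < a.1 → a.2 < b.2

instance (l : List P) : DecidablePred (MinP l) := fun _ => List.decidableBAll _ l

def keepP (w : List P) (m a : P) : Prop := a.2 < m.2 ∧ ∀ b ∈ w, b.1 < a.1 → a.2 < b.2

instance (w : List P) (m : P) : DecidablePred (keepP w m) := fun _ => instDecidableAnd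

lemma strip_aux : ∀ (w : List P) (m : P) (p : List P) (ps : List (List P)),
    (∀ a ∈ w, m.1 < a.1) → w.Pairwise fstlt → (m :: w).Pairwise sndne →
    List.foldl (fun s c => ins c s) ((m :: p) :: ps) w
      = ((w.filter (fun a => decide (keepP w m a))).reverse ++ (m :: p))
          :: List.foldl (fun s c => ins c s) ps (w.filter (fun a => !decide (keepP w m a)))
  | [], m, p, ps, _, _, _ => by simp
  | c :: w, m, p, ps, h1, h2, h3 => by
    have hcw1 : ∀ b ∈ w, c.1 < b.1 := fun b hb => (List.pairwise_cons.mp h2).1 b hb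
    have hcw2 : w.Pairwise fstlt := (List.pairwise_cons.mp h2).2
    have hcm : c.2 ≠ m.2 := fun h => ((List.pairwise_cons.mp h3).1 c (mem_cons_self)) h.symm
    have hfold : List.foldl (fun s c => ins c s) ((m :: p) :: ps) (c :: w)
        = List.foldl (fun s c => ins c s) (ins c ((m :: p) :: ps)) w := rfl
    by_cases hc : c.2 < m.2
    · -- c joins the first pile
      have hins : ins c ((m :: p) :: ps) = (c :: m :: p) :: ps := by simp [ins, hc]
      have hkc : keepP (c :: w) m c := ⟨hc, by
        intro b hb hlt
        rcases mem_cons.mp hb with rfl | hb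
        · exact absurd hlt (lt_irrefl _)
        · exact absurd hlt (not_lt.mpr (le_of_lt (hcw1 b hb)))⟩
      have hequiv : ∀ a ∈ w, keepP (c :: w) m a ↔ keepP w c a := by
        intro a ha
        constructor
        · rintro ⟨h4, h5⟩
          exact ⟨h5 c (mem_cons_self) (hcw1 a ha), fun b hb => h5 b (mem_cons_of_mem _ hb)⟩
        · rintro ⟨h4, h5⟩
          refine ⟨lt_trans h4 hc, ?_⟩
          intro b hb hlt
          rcases mem_cons.mp hb with rfl | hb
          · exact h4
          · exact h5 b hb hlt
      have hfilt : (c :: w).filter (fun a => decide (keepP (c :: w) m a))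
          = c :: w.filter (fun a => decide (keepP w c a)) := by
        rw [List.filter_cons_of_pos (by simpa using hkc)]
        congr 1
        exact List.filter_congr (fun a ha => by simp [hequiv a ha])
      have hfilt2 : (c :: w).filter (fun a => !decide (keepP (c :: w) m a))
          = w.filter (fun a => !decide (keepP w c a)) := by
        rw [List.filter_cons_of_neg (by simpa using hkc)]
        exact List.filter_congr (fun a ha => by simp [hequiv a ha])
      rw [hfold, hins, strip_aux w c (m :: p) ps hcw1 hcw2 h3.of_cons, hfilt, hfilt2]
      simp
    · -- c goes further right
      have hmc : m.2 < c.2 := lt_of_le_of_ne (not_lt.mp hc) (Ne.symm hcm)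
      have hins : ins c ((m :: p) :: ps) = (m :: p) :: ins c ps := by simp [ins, hc]
      have hnkc : ¬ keepP (c :: w) m c := fun h => hc h.1
      have hequiv : ∀ a ∈ w, keepP (c :: w) m a ↔ keepP w m a := by
        intro a ha
        constructor
        · rintro ⟨h4, h5⟩
          exact ⟨h4, fun b hb => h5 b (mem_cons_of_mem _ hb)⟩
        · rintro ⟨h4, h5⟩
          refine ⟨h4, ?_⟩
          intro b hb hlt
          rcases mem_cons.mp hb with rfl | hb
          · exact lt_trans h4 hmc
          · exact h5 b hb hlt
      have hfilt : (c :: w).filter (fun a => decide (keepP (c :: w) m a))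
          = w.filter (fun a => decide (keepP w m a)) := by
        rw [List.filter_cons_of_neg (by simpa using hnkc)]
        exact List.filter_congr (fun a ha => by simp [hequiv a ha])
      have hfilt2 : (c :: w).filter (fun a => !decide (keepP (c :: w) m a))
          = c :: w.filter (fun a => !decide (keepP w m a)) := by
        rw [List.filter_cons_of_pos (by simpa using hnkc)]
        congr 1
        exact List.filter_congr (fun a ha => by simp [hequiv a ha])
      have h3' : (m :: w).Pairwise sndne := by
        refine h3.sublist ?_
        exact List.cons_sublist_cons.mpr (List.sublist_cons_self c w)
      rw [hfold, hins, strip_aux w m p (ins c ps) (fun a ha => h1 a (mem_cons_of_mem _ ha)) hcw2 h3',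
        hfilt, hfilt2]
      rfl

lemma minP_cons_head (c : P) (w : List P) (h2 : (c :: w).Pairwise fstlt) : MinP (c :: w) c := by
  intro b hb hlt
  rcases mem_cons.mp hb with rfl | hb
  · exact absurd hlt (lt_irrefl _)
  · exact absurd hlt (not_lt.mpr (le_of_lt ((List.pairwise_cons.mp h2).1 b hb)))

lemma strip (c : P) (w : List P) (h2 : (c :: w).Pairwise fstlt) (h3 : (c :: w).Pairwise sndne) :
    pilesP (c :: w)
      = ((c :: w).filter (fun a => decide (MinP (c :: w) a))).reverse
          :: pilesP ((c :: w).filter (fun a => !decide (MinP (c :: w) a))) := by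
  have hcw1 : ∀ b ∈ w, c.1 < b.1 := fun b hb => (List.pairwise_cons.mp h2).1 b hb
  have hequiv : ∀ a ∈ w, keepP w c a ↔ MinP (c :: w) a := by
    intro a ha
    constructor
    · rintro ⟨h4, h5⟩
      intro b hb hlt
      rcases mem_cons.mp hb with rfl | hb
      · exact h4
      · exact h5 b hb hlt
    · intro h
      exact ⟨h c (mem_cons_self) (hcw1 a ha), fun b hb => h b (mem_cons_of_mem _ hb)⟩
  have h0 : pilesP (c :: w) = List.foldl (fun s c => ins c s) (([c]) :: []) w := rfl
  rw [h0, strip_aux w c [] [] hcw1 (List.pairwise_cons.mp h2).2 h3]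
  have e1 : (c :: w).filter (fun a => decide (MinP (c :: w) a))
      = c :: w.filter (fun a => decide (keepP w c a)) := by
    rw [List.filter_cons_of_pos (by simpa using minP_cons_head c w h2)]
    congr 1
    exact (List.filter_congr (fun a ha => by simp [hequiv a ha])).symm
  have e2 : (c :: w).filter (fun a => !decide (MinP (c :: w) a))
      = w.filter (fun a => !decide (keepP w c a)) := by
    rw [List.filter_cons_of_neg (by simpa using minP_cons_head c w h2)]
    exact (List.filter_congr (fun a ha => by simp [hequiv a ha])).symm
  rw [e1, e2]
  simp [pilesP]

end Stmt10Aux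

namespace Stmt10Aux
open List

lemma pairwise_ne_of_fstlt {l : List P} (h : l.Pairwise fstlt) :
    ∀ a ∈ l, ∀ b ∈ l, a ≠ b → a.1 ≠ b.1 := by
  have h' : l.Pairwise (fun a b : P => a.1 ≠ b.1) := h.imp (fun hab => ne_of_lt hab)
  have hsym : Symmetric (fun a b : P => a.1 ≠ b.1) := fun x y hxy => Ne.symm hxy
  haveI : Std.Symm (fun a b : P => a.1 ≠ b.1) := ⟨fun x y h => hsym h⟩
  exact fun a ha b hb hne => h'.forall ha hb hne

lemma pairwise_ne_of_sndne {l : List P} (h : l.Pairwise sndne) :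
    ∀ a ∈ l, ∀ b ∈ l, a ≠ b → a.2 ≠ b.2 := by
  have hsym : Symmetric sndne := fun x y hxy => Ne.symm hxy
  haveI : Std.Symm sndne := ⟨fun x y h => hsym h⟩
  exact fun a ha b hb hne => h.forall ha hb hne

lemma minP_swap {l l' : List P} (hf : l.Pairwise fstlt) (hs : l.Pairwise sndne)
    (hperm : l' ~ l.map Prod.swap) {a : P} (ha : a ∈ l) :
    MinP l' a.swap ↔ MinP l a := by
  have hmem : ∀ b' : P, b' ∈ l' ↔ ∃ b ∈ l, b' = b.swap := by
    intro b'
    rw [hperm.mem_iff, List.mem_map]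
    constructor
    · rintro ⟨b, hb, rfl⟩; exact ⟨b, hb, rfl⟩
    · rintro ⟨b, hb, rfl⟩; exact ⟨b, hb, rfl⟩
  have key : MinP l' a.swap ↔ ∀ b ∈ l, b.2 < a.2 → a.1 < b.1 := by
    constructor
    · intro h b hb hlt
      exact h b.swap ((hmem b.swap).mpr ⟨b, hb, rfl⟩) hlt
    · intro h b' hb' hlt
      obtain ⟨b, hb, rfl⟩ := (hmem b').mp hb'
      exact h b hb hlt
  rw [key]
  constructor
  · intro h b hb hlt
    by_cases hab : b = a
    · exact absurd hlt (by simp [hab])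
    · rcases lt_trichotomy b.2 a.2 with h1 | h1 | h1
      · exact absurd (h b hb h1) (not_lt.mpr (le_of_lt hlt))
      · exact absurd h1 (pairwise_ne_of_sndne hs b hb a ha hab)
      · exact h1
  · intro h b hb hlt
    by_cases hab : b = a
    · exact absurd hlt (by simp [hab])
    · rcases lt_trichotomy b.1 a.1 with h1 | h1 | h1
      · exact absurd (h b hb h1) (not_lt.mpr (le_of_lt hlt))
      · exact absurd h1 (pairwise_ne_of_fstlt hf b hb a ha hab)
      · exact h1

instance : IsAntisymm P fstlt := ⟨fun _ _ h1 h2 => absurd h1 (lt_asymm h2)⟩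

lemma filter_swap_perm {l l' : List P} (hf : l.Pairwise fstlt) (hs : l.Pairwise sndne)
    (hperm : l' ~ l.map Prod.swap) (g : Bool → Bool) :
    l'.filter (fun a => g (decide (MinP l' a)))
      ~ (l.filter (fun a => g (decide (MinP l a)))).map Prod.swap := by
  calc l'.filter (fun a => g (decide (MinP l' a)))
      ~ (l.map Prod.swap).filter (fun a => g (decide (MinP l' a))) := hperm.filter _
    _ = (l.filter (fun a => g (decide (MinP l' a.swap)))).map Prod.swap := by
        rw [List.filter_map]; rfl
    _ = (l.filter (fun a => g (decide (MinP l a)))).map Prod.swap := by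
        congr 1
        exact List.filter_congr (fun a ha => by
          rw [decide_eq_decide.mpr (minP_swap hf hs hperm ha)])

lemma sndne_of_perm_swap {l l' : List P} (hf : l.Pairwise fstlt)
    (hperm : l' ~ l.map Prod.swap) : l'.Pairwise sndne := by
  have h1 : (l'.map Prod.snd).Nodup := by
    have h2 : l'.map Prod.snd ~ l.map Prod.fst := by
      calc l'.map Prod.snd ~ (l.map Prod.swap).map Prod.snd := hperm.map _
        _ = l.map Prod.fst := by simp [List.map_map]
    have h3 : (l.map Prod.fst).Nodup :=
      List.pairwise_map.mpr (hf.imp (fun hab => ne_of_lt hab))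
    exact h2.nodup_iff.mpr h3
  have h4 : List.Pairwise Ne (l'.map Prod.snd) := h1
  exact (List.pairwise_map.mp h4).imp (fun h => h)

lemma sym : ∀ (N : ℕ) (l l' : List P), l.length ≤ N →
    l.Pairwise fstlt → l'.Pairwise fstlt → l.Pairwise sndne →
    l' ~ l.map Prod.swap →
    pilesP l' = (pilesP l).map (fun q => (q.map Prod.swap).reverse)
  | _, [], l', _, _, _, _, hperm => by
      have : l' = [] := hperm.eq_nil
      simp [this, pilesP]
  | 0, c :: w, _, hlen, _, _, _, _ => by simp at hlen
  | N + 1, c :: w, [], _, _, _, _, hperm => by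
      have := hperm.length_eq
      simp at this
  | N + 1, c :: w, c' :: w', hlen, hf, hf', hs, hperm => by
      have hs' : (c' :: w').Pairwise sndne := sndne_of_perm_swap hf hperm
      have hstrip := strip c w hf hs
      have hstrip' := strip c' w' hf' hs'
      have hmins : (c' :: w').filter (fun a => decide (MinP (c' :: w') a))
          = ((((c :: w)).filter (fun a => decide (MinP (c :: w) a))).map Prod.swap).reverse := by
        refine List.Perm.eq_of_pairwise (le := fstlt) (fun a b _ _ x y => absurd x (lt_asymm (α := ℕ) y)) ?_ ?_ ?_
        rotate_right
        · exact (filter_swap_perm hf hs hperm id).trans (List.reverse_perm _).symm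
        · exact (hf'.filter _)
        · rw [List.pairwise_reverse, List.pairwise_map]
          have h1 : (((c :: w)).filter (fun a => decide (MinP (c :: w) a))).Pairwise fstlt :=
            hf.filter _
          refine h1.imp_of_mem ?_
          intro a b ha hb hab
          have hbmin : MinP (c :: w) b := by simpa using (List.of_mem_filter hb)
          exact hbmin a (List.mem_of_mem_filter ha) hab
      have htail : (c' :: w').filter (fun a => !decide (MinP (c' :: w') a))
          ~ ((c :: w).filter (fun a => !decide (MinP (c :: w) a))).map Prod.swap :=
        filter_swap_perm hf hs hperm (fun b => !b)
      have hminc : MinP (c :: w) c := minP_cons_head c w hf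
      have hlen2 : ((c :: w).filter (fun a => !decide (MinP (c :: w) a))).length ≤ N := by
        rw [List.filter_cons_of_neg (by simpa using hminc)]
        calc (w.filter (fun a => !decide (MinP (c :: w) a))).length ≤ w.length :=
              List.length_filter_le _ _
          _ ≤ N := Nat.succ_le_succ_iff.mp (by simpa using hlen)
      have hrec := sym N ((c :: w).filter (fun a => !decide (MinP (c :: w) a)))
        ((c' :: w').filter (fun a => !decide (MinP (c' :: w') a)))
        hlen2 (hf.filter _) (hf'.filter _) (hs.filter _) htail
      rw [hstrip', hstrip, hmins, hrec]
      simp [List.map_reverse]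

end Stmt10Aux

namespace Stmt10Aux
open List

def fstdesc (q : List P) : Prop := q.Pairwise (fun a b : P => b.1 < a.1)

lemma ins_mem : ∀ (ps : List (List P)) (c : P) (q : List P), q ∈ ins c ps →
    ∀ a ∈ q, a = c ∨ ∃ q' ∈ ps, a ∈ q'
  | [], c, q, hq, a, ha => by
      simp [ins] at hq
      subst hq
      simp at ha
      exact Or.inl ha
  | [] :: ps, c, q, hq, a, ha => by
      simp only [ins, mem_cons] at hq
      rcases hq with rfl | hq
      · simp at ha
      · rcases ins_mem ps c q hq a ha with h | ⟨q', hq', ha'⟩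
        · exact Or.inl h
        · exact Or.inr ⟨q', mem_cons_of_mem _ hq', ha'⟩
  | (x :: p) :: ps, c, q, hq, a, ha => by
      by_cases h : c.2 < x.2
      · simp only [ins, if_pos h, mem_cons] at hq
        rcases hq with rfl | hq
        · rcases mem_cons.mp ha with rfl | ha'
          · exact Or.inl rfl
          · exact Or.inr ⟨x :: p, mem_cons_self, ha'⟩
        · exact Or.inr ⟨q, mem_cons_of_mem _ hq, ha⟩
      · simp only [ins, if_neg h, mem_cons] at hq
        rcases hq with rfl | hq
        · exact Or.inr ⟨x :: p, mem_cons_self, ha⟩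
        · rcases ins_mem ps c q hq a ha with h' | ⟨q', hq', ha'⟩
          · exact Or.inl h'
          · exact Or.inr ⟨q', mem_cons_of_mem _ hq', ha'⟩

lemma ins_desc : ∀ (ps : List (List P)) (c : P), (∀ q ∈ ps, fstdesc q) →
    (∀ q ∈ ps, ∀ a ∈ q, a.1 < c.1) → ∀ q ∈ ins c ps, fstdesc q
  | [], c, _, _, q, hq => by
      simp [ins] at hq
      subst hq
      simp [fstdesc]
  | [] :: ps, c, hd, hb, q, hq => by
      simp only [ins, mem_cons] at hq
      rcases hq with rfl | hq
      · simp [fstdesc]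
      · exact ins_desc ps c (fun q' h => hd q' (mem_cons_of_mem _ h))
          (fun q' h => hb q' (mem_cons_of_mem _ h)) q hq
  | (x :: p) :: ps, c, hd, hb, q, hq => by
      by_cases h : c.2 < x.2
      · simp only [ins, if_pos h, mem_cons] at hq
        rcases hq with rfl | hq
        · refine List.pairwise_cons.mpr ⟨?_, hd _ (mem_cons_self)⟩
          intro b hbm
          exact hb _ (mem_cons_self) b hbm
        · exact hd q (mem_cons_of_mem _ hq)
      · simp only [ins, if_neg h, mem_cons] at hq
        rcases hq with rfl | hq
        · exact hd _ (mem_cons_self)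
        · exact ins_desc ps c (fun q' h' => hd q' (mem_cons_of_mem _ h'))
            (fun q' h' => hb q' (mem_cons_of_mem _ h')) q hq

lemma foldl_desc : ∀ (l : List P) (ps : List (List P)), l.Pairwise fstlt →
    (∀ q ∈ ps, fstdesc q) → (∀ q ∈ ps, ∀ a ∈ q, ∀ b ∈ l, a.1 < b.1) →
    ∀ q ∈ List.foldl (fun s c => ins c s) ps l, fstdesc q
  | [], ps, _, hd, _, q, hq => hd q hq
  | c :: l, ps, hl, hd, hb, q, hq => by
      have hl1 : ∀ b ∈ l, c.1 < b.1 := fun b h => (List.pairwise_cons.mp hl).1 b h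
      refine foldl_desc l (ins c ps) (List.pairwise_cons.mp hl).2 ?_ ?_ q hq
      · exact ins_desc ps c hd (fun q' h a ha => hb q' h a ha c (mem_cons_self))
      · intro q' hq' a ha b hbl
        rcases ins_mem ps c q' hq' a ha with rfl | ⟨q'', hq'', ha'⟩
        · exact hl1 b hbl
        · exact hb q'' hq'' a ha' b (mem_cons_of_mem _ hbl)

lemma pilesP_desc (l : List P) (h : l.Pairwise fstlt) : ∀ q ∈ pilesP l, fstdesc q :=
  foldl_desc l [] h (by simp) (by simp)

/-! ### The pair list of a permutation -/

def lp {n : ℕ} (σ : Equiv.Perm (Fin n)) : List P :=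
  List.ofFn fun i => ((i : ℕ) + 1, (σ i : ℕ) + 1)

lemma lp_map_snd {n : ℕ} (σ : Equiv.Perm (Fin n)) : (lp σ).map Prod.snd = permWord σ := by
  simp only [lp, permWord, List.map_ofFn]
  rfl

lemma lp_fst {n : ℕ} (σ : Equiv.Perm (Fin n)) : (lp σ).Pairwise fstlt := by
  rw [lp, List.pairwise_ofFn]
  intro i j hij
  simpa [fstlt] using (Fin.lt_iff_val_lt_val.mp hij)

lemma lp_snd {n : ℕ} (σ : Equiv.Perm (Fin n)) : (lp σ).Pairwise sndne := by
  rw [lp, List.pairwise_ofFn]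
  intro i j hij
  simp only [sndne]
  have : σ i ≠ σ j := fun h => absurd (σ.injective h) (ne_of_lt hij)
  simpa using fun h => this (Fin.ext h)

lemma lp_nodup {n : ℕ} (σ : Equiv.Perm (Fin n)) : (lp σ).Nodup :=
  (lp_fst σ).imp (fun hab h => absurd (congrArg Prod.fst h) (ne_of_lt hab))

lemma lp_mem {n : ℕ} (σ : Equiv.Perm (Fin n)) (a : P) :
    a ∈ lp σ ↔ ∃ i : Fin n, a = ((i : ℕ) + 1, (σ i : ℕ) + 1) := by
  simp [lp, List.mem_ofFn, eq_comm]

lemma lp_perm {n : ℕ} (σ : Equiv.Perm (Fin n)) : lp σ⁻¹ ~ (lp σ).map Prod.swap := by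
  apply List.perm_of_nodup_nodup_toFinset_eq (lp_nodup σ⁻¹)
    ((lp_nodup σ).map Prod.swap_injective)
  ext a
  simp only [List.mem_toFinset, List.mem_map]
  constructor
  · intro ha
    obtain ⟨i, rfl⟩ := (lp_mem σ⁻¹ a).mp ha
    refine ⟨((σ⁻¹ i : ℕ) + 1, (i : ℕ) + 1), ?_, rfl⟩
    rw [lp_mem]
    exact ⟨σ⁻¹ i, by simp⟩
  · rintro ⟨b, hb, rfl⟩
    obtain ⟨i, rfl⟩ := (lp_mem σ b).mp hb
    rw [lp_mem]
    exact ⟨σ i, by simp [Prod.swap]⟩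

end Stmt10Aux

namespace Stmt10Aux
open List

lemma rpiles {n : ℕ} (σ : Equiv.Perm (Fin n)) :
    PSpiles (permWord σ) = (pilesP (lp σ)).map (List.map Prod.snd) := by
  rw [← lp_map_snd, pilesP_proj]

lemma sym_sigma {n : ℕ} (σ : Equiv.Perm (Fin n)) :
    pilesP (lp σ⁻¹) = (pilesP (lp σ)).map (fun q => (q.map Prod.swap).reverse) :=
  sym (lp σ).length (lp σ) (lp σ⁻¹) le_rfl (lp_fst σ) (lp_fst σ⁻¹) (lp_snd σ) (lp_perm σ)

lemma permWord_getD {n : ℕ} (σ : Equiv.Perm (Fin n)) (k : ℕ) (hk : k < n) :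
    (permWord σ).getD k 0 = (σ ⟨k, hk⟩ : ℕ) + 1 := by
  have hlen : (permWord σ).length = n := by simp [permWord]
  rw [List.getD_eq_getElem _ _ (by omega)]
  simp only [permWord, List.getElem_ofFn]

lemma spiles {n : ℕ} (σ : Equiv.Perm (Fin n)) :
    Spiles (permWord σ) = (pilesP (lp σ)).map (fun q => (q.map Prod.fst).reverse) := by
  have hlen : (permWord σ).length = n := by simp [permWord]
  rw [Spiles, rpiles, List.map_map]
  refine List.map_congr_left ?_
  intro q hq
  have hql : ∀ a ∈ q, a ∈ lp σ := by
    intro a ha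
    exact (pilesP_flatten (lp σ)).mem_iff.mp (List.mem_flatten.mpr ⟨q, hq, ha⟩)
  have hdesc : fstdesc q := pilesP_desc (lp σ) (lp_fst σ) q hq
  have hmem : ∀ i : ℕ,
      (i ∈ range' 1 (permWord σ).length ∧ (permWord σ).getD (i - 1) 0 ∈ q.map Prod.snd)
        ↔ i ∈ q.map Prod.fst := by
    intro i
    constructor
    · rintro ⟨hr, hv⟩
      rw [hlen, List.mem_range'_1] at hr
      obtain ⟨h1, h2⟩ := hr
      have hk : i - 1 < n := by omega
      rw [permWord_getD σ (i - 1) hk] at hv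
      obtain ⟨a, haq, ha2⟩ := List.mem_map.mp hv
      obtain ⟨j, rfl⟩ := (lp_mem σ a).mp (hql a haq)
      have : σ j = σ ⟨i - 1, hk⟩ := Fin.ext (by omega)
      have hj : j = ⟨i - 1, hk⟩ := σ.injective this
      refine List.mem_map.mpr ⟨_, haq, ?_⟩
      have hv : ((⟨i - 1, hk⟩ : Fin n) : ℕ) = i - 1 := rfl
      simp only [hj, hv]
      omega
    · intro hi
      obtain ⟨a, haq, ha1⟩ := List.mem_map.mp hi
      obtain ⟨j, rfl⟩ := (lp_mem σ a).mp (hql a haq)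
      simp only at ha1
      constructor
      · rw [hlen, List.mem_range'_1]
        omega
      · have hk : i - 1 < n := by omega
        rw [permWord_getD σ (i - 1) hk]
        refine List.mem_map.mpr ⟨_, haq, ?_⟩
        have : j = ⟨i - 1, hk⟩ := Fin.ext (show (j : ℕ) = i - 1 by omega)
        simp [this]
  refine List.Perm.eq_of_pairwise (le := (· < · : ℕ → ℕ → Prop)) (fun a b _ _ x y => absurd x (lt_asymm y)) ?_ ?_ ?_
  rotate_right
  · apply List.perm_of_nodup_nodup_toFinset_eq
    · exact ((List.pairwise_lt_range' 1 Nat.one_pos).imp ne_of_lt).filter _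
    · have : (q.map Prod.fst).reverse.Pairwise (· < ·) := by
        rw [List.pairwise_reverse, List.pairwise_map]
        exact hdesc
      exact this.imp ne_of_lt
    · ext i
      simp only [Function.comp_apply, List.mem_toFinset, List.mem_filter, List.mem_reverse,
        decide_eq_true_eq]
      exact hmem i
  · exact (List.pairwise_lt_range' 1 Nat.one_pos).filter _
  · rw [List.pairwise_reverse, List.pairwise_map]
    exact hdesc

lemma main_eq {n : ℕ} (σ : Equiv.Perm (Fin n)) :
    Spiles (permWord σ) = PSpiles (permWord σ⁻¹) := by
  rw [rpiles σ⁻¹, sym_sigma σ, List.map_map, spiles σ]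
  refine List.map_congr_left (fun q _ => ?_)
  simp only [Function.comp_apply, List.map_reverse, List.map_map]
  congr 1

lemma rec_lemma {n : ℕ} (σ τ : Equiv.Perm (Fin n))
    (hR : PSpiles (permWord σ) = PSpiles (permWord τ))
    (hS : Spiles (permWord σ) = Spiles (permWord τ)) : σ = τ := by
  have h1 : (pilesP (lp σ)).map (List.map Prod.snd)
      = (pilesP (lp τ)).map (List.map Prod.snd) := by
    rw [← rpiles, ← rpiles, hR]
  have h2 : (pilesP (lp σ)).map (fun q => (q.map Prod.fst).reverse)
      = (pilesP (lp τ)).map (fun q => (q.map Prod.fst).reverse) := by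
    rw [← spiles, ← spiles, hS]
  have hlen : (pilesP (lp σ)).length = (pilesP (lp τ)).length := by
    have := congrArg List.length h1
    simpa using this
  have hAB : pilesP (lp σ) = pilesP (lp τ) := by
    apply List.ext_getElem hlen
    intro k hk1 hk2
    have e1 : (pilesP (lp σ))[k].map Prod.snd = (pilesP (lp τ))[k].map Prod.snd := by
      have := congrArg (fun L => L[k]? ) h1
      simpa [List.getElem?_map, List.getElem?_eq_getElem, hk1, hk2] using this
    have e2 : (pilesP (lp σ))[k].map Prod.fst = (pilesP (lp τ))[k].map Prod.fst := by
      have := congrArg (fun L => L[k]? ) h2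
      simp only [List.getElem?_map, List.getElem?_eq_getElem, hk1, hk2, Option.map_some] at this
      have := Option.some.inj this
      rwa [List.reverse_inj] at this
    calc (pilesP (lp σ))[k]
        = ((pilesP (lp σ))[k].map Prod.fst).zip ((pilesP (lp σ))[k].map Prod.snd) := by
          rw [← List.unzip_fst, ← List.unzip_snd, List.zip_unzip]
      _ = ((pilesP (lp τ))[k].map Prod.fst).zip ((pilesP (lp τ))[k].map Prod.snd) := by
          rw [e1, e2]
      _ = (pilesP (lp τ))[k] := by rw [← List.unzip_fst, ← List.unzip_snd, List.zip_unzip]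
  ext i
  have hmemσ : ((i : ℕ) + 1, (σ i : ℕ) + 1) ∈ lp σ := (lp_mem σ _).mpr ⟨i, rfl⟩
  have : ((i : ℕ) + 1, (σ i : ℕ) + 1) ∈ lp τ := by
    have h3 := (pilesP_flatten (lp σ)).symm.mem_iff.mp hmemσ
    rw [hAB] at h3
    exact (pilesP_flatten (lp τ)).mem_iff.mp h3
  obtain ⟨j, hj⟩ := (lp_mem τ _).mp this
  have hij : (i : ℕ) = (j : ℕ) := by
    have := congrArg Prod.fst hj
    simpa using this
  have : (σ i : ℕ) = (τ j : ℕ) := by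
    have := congrArg Prod.snd hj
    simpa using this
  have hji : j = i := Fin.ext hij.symm
  rw [hji] at this
  exact this

end Stmt10Aux

namespace Stmt10Aux

lemma iff_lemma {n : ℕ} (σ : Equiv.Perm (Fin n)) :
    σ⁻¹ = σ ↔ PSpiles (permWord σ) = Spiles (permWord σ) := by
  constructor
  · intro h
    rw [main_eq σ, h]
  · intro h
    have h1 : PSpiles (permWord σ⁻¹) = PSpiles (permWord σ) := by
      rw [← main_eq σ, ← h]
    have h2 : Spiles (permWord σ⁻¹) = Spiles (permWord σ) := by
      rw [main_eq σ⁻¹, inv_inv, h]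
    exact rec_lemma σ⁻¹ σ h1 h2

end Stmt10Aux


/-- A permutation `σ` is an involution (`σ = σ⁻¹`) if and only if its
insertion and recording piles under Extended Patience Sorting coincide, `R(σ) = S(σ)`;
consequently `σ ↦ R(σ)` is a bijection from the involutions in `S_n` onto the pile
configurations `R` for which `(R, R)` arises as `(R(σ), S(σ))` for some permutation `σ`. -/
theorem stmt10 (n : ℕ) :
    (∀ σ : Equiv.Perm (Fin n),
      σ⁻¹ = σ ↔ PSpiles (permWord σ) = Spiles (permWord σ)) ∧
    Set.BijOn (fun σ : Equiv.Perm (Fin n) => PSpiles (permWord σ))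
      {σ | σ⁻¹ = σ}
      {R | ∃ σ : Equiv.Perm (Fin n),
        PSpiles (permWord σ) = R ∧ Spiles (permWord σ) = R} := by
  refine ⟨Stmt10Aux.iff_lemma, ⟨?_, ?_, ?_⟩⟩
  · intro σ hσ
    exact ⟨σ, rfl, ((Stmt10Aux.iff_lemma σ).mp hσ).symm⟩
  · intro σ hσ τ hτ h
    have hS : Spiles (permWord σ) = Spiles (permWord τ) := by
      rw [← (Stmt10Aux.iff_lemma σ).mp hσ, ← (Stmt10Aux.iff_lemma τ).mp hτ]
      exact h
    exact Stmt10Aux.rec_lemma σ τ h hS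
  · rintro R ⟨σ, h1, h2⟩
    exact ⟨σ, (Stmt10Aux.iff_lemma σ).mpr (h1.trans h2.symm), h1⟩
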